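/- Let A be a 2×2 real symmetric matrix, M a 2×2 real symmetric positive semi-definite matrix, and b, m real numbers with m² = det M. If the 4×4 block matrix [[A, bR⊥],[−bR⊥, A]] − F·[[M, mR⊥],[−mR⊥, M]] is positive semi-definite for a real number F ≥ 0, then tr A ≥ F·tr M and det(A − F·M) ≥ (b − F·m)², where R⊥ = [[0,1],[−1,0]]. -/

import Mathlib

open Matrix

/-- If `[[A, bR⊥],[−bR⊥, A]] − F·[[M, mR⊥],[−mR⊥, M]] ⪰ 0` with `F ≥ 0`, `m² = det M`,
then `tr A ≥ F tr M` and `det(A − FM) ≥ (b − Fm)²`. -/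
theorem stmt_13 (A M : Matrix (Fin 2) (Fin 2) ℝ) (b m F : ℝ)
    (hA : A.IsSymm) (hM : M.IsSymm) (hMpsd : M.PosSemidef) (hm : m ^ 2 = M.det)
    (hF : 0 ≤ F)
    (hpsd : (fromBlocks A (b • !![0, 1; -1, 0]) (-(b • !![0, 1; -1, 0])) A
            - F • fromBlocks M (m • !![0, 1; -1, 0]) (-(m • !![0, 1; -1, 0])) M).PosSemidef) :
    F * M.trace ≤ A.trace ∧ (b - F * m) ^ 2 ≤ (A - F • M).det := by
  have hA10 : A 1 0 = A 0 1 := hA.apply 0 1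
  have hM10 : M 1 0 = M 0 1 := hM.apply 0 1
  set p : ℝ := A 0 0 - F * M 0 0 with hp_def
  set q : ℝ := A 0 1 - F * M 0 1 with hq_def
  set r : ℝ := A 1 1 - F * M 1 1 with hr_def
  set c : ℝ := b - F * m with hc_def
  have hQ : ∀ x1 x2 x3 x4 : ℝ, 0 ≤ (x1^2 + x3^2) * p + 2*(x1*x2 + x3*x4) * q
      + (x2^2 + x4^2) * r + 2*(x1*x4 - x2*x3) * c := by
    intro x1 x2 x3 x4
    have h := hpsd.dotProduct_mulVec_nonneg (Sum.elim ![x1,x2] ![x3,x4])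
    simp [dotProduct, mulVec, Fintype.sum_sum_type, Fin.sum_univ_two, fromBlocks] at h
    rw [hA10, hM10] at h
    rw [hp_def, hq_def, hr_def, hc_def]
    ring_nf
    ring_nf at h
    linarith
  have hp : 0 ≤ p := by have := hQ 1 0 0 0; linarith
  have hr : 0 ≤ r := by have := hQ 0 1 0 0; linarith
  have h1 : 0 ≤ p * (p*r - q^2 - c^2) := by have := hQ (-q) p c 0; nlinarith [this]
  constructor
  · rw [Matrix.trace_fin_two, Matrix.trace_fin_two]
    have : 0 ≤ p + r := by linarith
    rw [hp_def, hr_def] at this; linarith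
  · have hdet : (A - F • M).det = p * r - q^2 := by
      rw [Matrix.det_fin_two]
      simp [hp_def, hq_def, hr_def, hA10, hM10]
      ring
    rw [hdet]
    rcases eq_or_lt_of_le hp with hp0 | hp0
    · -- p = 0, show q = 0 and c = 0
      have hq : q = 0 := by
        by_contra h0
        have hq2 : (0:ℝ) < q^2 := by positivity
        have h := hQ (-q*((r+1)/(2*q^2))) 1 0 0
        rw [← hp0] at h
        have e : 2*q^2*((r+1)/(2*q^2)) = r+1 := by field_simp
        nlinarith [h, e]
      have hc : c = 0 := by
        by_contra h0
        have hc2 : (0:ℝ) < c^2 := by positivity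
        have h := hQ 0 1 (c*((r+1)/(2*c^2))) 0
        rw [← hp0] at h
        have e : 2*c^2*((r+1)/(2*c^2)) = r+1 := by field_simp
        nlinarith [h, e]
      rw [hq, hc, ← hp0]; norm_num
    · nlinarith [h1, hp0]
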